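/- (Gauge covariance of the gauge strength.) Let U ⊆ ℝᵐ be open, let A_μ : U → Matrix (Fin k) (Fin k) ℝ be smooth matrix-valued gauge potentials (μ ∈ Fin m), and let T : U → Matrix (Fin k) (Fin k) ℝ be smooth with T(x) invertible for every x ∈ U. Define the transformed potentials A'_μ = T (A_μ − T⁻¹ ∂_μ T) T⁻¹ and the gauge strengths F_{μν} = ∂_μ A_ν − ∂_ν A_μ + [A_μ, A_ν] and F'_{μν} = ∂_μ A'_ν − ∂_ν A'_μ + [A'_μ, A'_ν]. Then F'_{μν} = T F_{μν} T⁻¹ at every point of U and for all μ, ν. -/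

import Mathlib

open Matrix

/-- The entrywise partial derivative of a matrix-valued function on `ℝᵐ` in the `μ`-th
coordinate direction. -/
noncomputable def pdM {m k : ℕ} (μ : Fin m)
    (X : (Fin m → ℝ) → Matrix (Fin k) (Fin k) ℝ) (x : Fin m → ℝ) :
    Matrix (Fin k) (Fin k) ℝ :=
  Matrix.of fun i j => fderiv ℝ (fun y => X y i j) x (Pi.single μ 1)

/-- The gauge strength `F_{μν} = ∂_μ A_ν − ∂_ν A_μ + [A_μ, A_ν]` of matrix-valued gauge
potentials `A`. -/
noncomputable def gaugeStrength {m k : ℕ}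
    (A : Fin m → (Fin m → ℝ) → Matrix (Fin k) (Fin k) ℝ)
    (μ ν : Fin m) (x : Fin m → ℝ) : Matrix (Fin k) (Fin k) ℝ :=
  pdM μ (A ν) x - pdM ν (A μ) x + (A μ x * A ν x - A ν x * A μ x)

private lemma entry_mul_diffAt {m k : ℕ} {X Y : (Fin m → ℝ) → Matrix (Fin k) (Fin k) ℝ}
    {x : Fin m → ℝ}
    (hX : ∀ i j, DifferentiableAt ℝ (fun y => X y i j) x)
    (hY : ∀ i j, DifferentiableAt ℝ (fun y => Y y i j) x) (i j : Fin k) :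
    DifferentiableAt ℝ (fun y => (X y * Y y) i j) x := by
  simp only [Matrix.mul_apply]
  exact DifferentiableAt.fun_sum fun l _ => (hX i l).mul (hY l j)

private lemma pdM_mul {m k : ℕ} (μ : Fin m) (X Y : (Fin m → ℝ) → Matrix (Fin k) (Fin k) ℝ)
    (x : Fin m → ℝ)
    (hX : ∀ i j, DifferentiableAt ℝ (fun y => X y i j) x)
    (hY : ∀ i j, DifferentiableAt ℝ (fun y => Y y i j) x) :
    pdM μ (fun y => X y * Y y) x = pdM μ X x * Y x + X x * pdM μ Y x := by
  ext i j
  simp only [pdM, Matrix.of_apply, Matrix.add_apply, Matrix.mul_apply]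
  rw [fderiv_fun_sum (fun l _ => ((hX i l).fun_mul (hY l j)))]
  simp only [ContinuousLinearMap.coe_sum', Finset.sum_apply]
  rw [← Finset.sum_add_distrib]
  refine Finset.sum_congr rfl fun l _ => ?_
  rw [fderiv_fun_mul (hX i l) (hY l j)]
  simp only [ContinuousLinearMap.add_apply, ContinuousLinearMap.smul_apply, smul_eq_mul]
  ring

private lemma pdM_sub {m k : ℕ} (μ : Fin m) (X Y : (Fin m → ℝ) → Matrix (Fin k) (Fin k) ℝ)
    (x : Fin m → ℝ)
    (hX : ∀ i j, DifferentiableAt ℝ (fun y => X y i j) x)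
    (hY : ∀ i j, DifferentiableAt ℝ (fun y => Y y i j) x) :
    pdM μ (fun y => X y - Y y) x = pdM μ X x - pdM μ Y x := by
  ext i j
  simp only [pdM, Matrix.of_apply, Matrix.sub_apply]
  rw [fderiv_fun_sub (hX i j) (hY i j)]
  simp

private lemma pdM_congr {m k : ℕ} {μ : Fin m} {X Y : (Fin m → ℝ) → Matrix (Fin k) (Fin k) ℝ}
    {x : Fin m → ℝ} (h : X =ᶠ[nhds x] Y) : pdM μ X x = pdM μ Y x := by
  ext i j
  simp only [pdM, Matrix.of_apply]
  have : (fun y => X y i j) =ᶠ[nhds x] fun y => Y y i j := by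
    filter_upwards [h] with y hy; rw [hy]
  rw [this.fderiv_eq]

private lemma prod_diffAt {m : ℕ} {ι : Type*} (s : Finset ι) (f : ι → (Fin m → ℝ) → ℝ)
    {x : Fin m → ℝ} (h : ∀ i ∈ s, DifferentiableAt ℝ (f i) x) :
    DifferentiableAt ℝ (fun y => ∏ i ∈ s, f i y) x := by
  classical
  induction s using Finset.induction with
  | empty => simp
  | @insert a s hni ih =>
    simp only [Finset.prod_insert hni]
    exact (h _ (Finset.mem_insert_self a s)).mul
      (ih fun i hi => h i (Finset.mem_insert_of_mem hi))

private lemma det_diffAt {m k : ℕ} {X : (Fin m → ℝ) → Matrix (Fin k) (Fin k) ℝ}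
    {x : Fin m → ℝ}
    (hX : ∀ i j, DifferentiableAt ℝ (fun y => X y i j) x) :
    DifferentiableAt ℝ (fun y => (X y).det) x := by
  simp only [Matrix.det_apply]
  apply DifferentiableAt.fun_sum
  intro σ _
  simp only [Units.smul_def, zsmul_eq_mul]
  exact (differentiableAt_const _).mul
    (prod_diffAt _ _ fun i _ => hX (σ i) i)

private lemma inv_entry_diffAt {m k : ℕ} {X : (Fin m → ℝ) → Matrix (Fin k) (Fin k) ℝ}
    {x : Fin m → ℝ}
    (hX : ∀ i j, DifferentiableAt ℝ (fun y => X y i j) x)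
    (hdet : (X x).det ≠ 0) (i j : Fin k) :
    DifferentiableAt ℝ (fun y => (X y)⁻¹ i j) x := by
  have h1 : (fun y => (X y)⁻¹ i j)
      = fun y => ((X y).det)⁻¹ * ((X y).updateRow j (Pi.single i 1)).det := by
    funext y
    rw [Matrix.inv_def, Matrix.smul_apply, Matrix.adjugate_apply, Ring.inverse_eq_inv',
      smul_eq_mul]
  rw [h1]
  refine ((det_diffAt hX).inv hdet).mul (det_diffAt fun a b => ?_)
  simp only [Matrix.updateRow_apply]
  by_cases h : a = j <;> simp [h, hX a b]

theorem gauge_strength_covariant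
    (m k : ℕ) (U : Set (Fin m → ℝ)) (hU : IsOpen U)
    (A : Fin m → (Fin m → ℝ) → Matrix (Fin k) (Fin k) ℝ)
    (hA : ∀ (μ : Fin m) (i j : Fin k), ContDiffOn ℝ (⊤ : ℕ∞) (fun x => A μ x i j) U)
    (T : (Fin m → ℝ) → Matrix (Fin k) (Fin k) ℝ)
    (hT : ∀ i j : Fin k, ContDiffOn ℝ (⊤ : ℕ∞) (fun x => T x i j) U)
    (hTinv : ∀ x ∈ U, IsUnit (T x).det) :
    ∀ x ∈ U, ∀ μ ν : Fin m,
      gaugeStrength (fun ρ y => T y * (A ρ y - (T y)⁻¹ * pdM ρ T y) * (T y)⁻¹) μ ν x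
        = T x * gaugeStrength A μ ν x * (T x)⁻¹ := by
  intro x hx μ ν
  have hUx : U ∈ nhds x := hU.mem_nhds hx
  set S : (Fin m → ℝ) → Matrix (Fin k) (Fin k) ℝ := fun y => (T y)⁻¹ with hSdef
  have hs : ∀ y, (T y)⁻¹ = S y := fun _ => rfl
  simp only [hs]
  have hle1 : (1 : WithTop ℕ∞) ≤ ((⊤ : ℕ∞) : WithTop ℕ∞) := by
    exact_mod_cast (le_top : (1 : ℕ∞) ≤ ⊤)
  have hle2 : (1 : WithTop ℕ∞) + 1 ≤ ((⊤ : ℕ∞) : WithTop ℕ∞) := by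
    norm_cast
  have hTdy : ∀ y ∈ U, ∀ i j, DifferentiableAt ℝ (fun z => T z i j) y :=
    fun y hy i j => ((hT i j).contDiffAt (hU.mem_nhds hy)).differentiableAt (by simp)
  have hTd : ∀ i j, DifferentiableAt ℝ (fun z => T z i j) x := hTdy x hx
  have hAd : ∀ ρ (i j : Fin k), DifferentiableAt ℝ (fun z => A ρ z i j) x :=
    fun ρ i j => ((hA ρ i j).contDiffAt hUx).differentiableAt (by simp)
  have hdet : ∀ y ∈ U, (T y).det ≠ 0 := fun y hy => (hTinv y hy).ne_zero
  have hSd : ∀ i j, DifferentiableAt ℝ (fun z => S z i j) x :=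
    inv_entry_diffAt hTd (hdet x hx)
  have hTS : ∀ y ∈ U, T y * S y = 1 := fun y hy => Matrix.mul_nonsing_inv _ (hTinv y hy)
  have hST : ∀ y ∈ U, S y * T y = 1 := fun y hy => Matrix.nonsing_inv_mul _ (hTinv y hy)
  have hdTd : ∀ ρ (i j : Fin k), DifferentiableAt ℝ (fun y => pdM ρ T y i j) x := by
    intro ρ i j
    have hfc : ContDiffAt ℝ (⊤ : ℕ∞) (fun z => T z i j) x := (hT i j).contDiffAt hUx
    have h1 : DifferentiableAt ℝ (fderiv ℝ (fun z => T z i j)) x :=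
      (hfc.fderiv_right (m := 1) hle2).differentiableAt one_ne_zero
    exact h1.clm_apply (differentiableAt_const _)
  -- derivative of the inverse
  have hdS : ∀ ρ, pdM ρ S x = -(S x * (pdM ρ T x * S x)) := by
    intro ρ
    have h0 : pdM ρ (fun y => T y * S y) x = 0 := by
      have he : (fun y => T y * S y) =ᶠ[nhds x] fun _ => (1 : Matrix (Fin k) (Fin k) ℝ) := by
        filter_upwards [hUx] with y hy; exact hTS y hy
      rw [pdM_congr he]
      ext i j
      simp [pdM]
    rw [pdM_mul ρ T S x hTd hSd] at h0
    have hb : T x * pdM ρ S x = -(pdM ρ T x * S x) :=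
      neg_eq_of_add_eq_zero_right h0 |>.symm ▸ (eq_neg_of_add_eq_zero_right h0)
    calc pdM ρ S x = (S x * T x) * pdM ρ S x := by rw [hST x hx, one_mul]
      _ = S x * (T x * pdM ρ S x) := by rw [Matrix.mul_assoc]
      _ = S x * (-(pdM ρ T x * S x)) := by rw [hb]
      _ = -(S x * (pdM ρ T x * S x)) := by rw [mul_neg]
  -- symmetry of second derivatives
  have hsym : pdM μ (pdM ν T) x = pdM ν (pdM μ T) x := by
    ext i j
    simp only [pdM, Matrix.of_apply]
    set f : (Fin m → ℝ) → ℝ := fun y => T y i j with hf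
    have hfc : ContDiffAt ℝ (⊤ : ℕ∞) f x := (hT i j).contDiffAt hUx
    have hf' : DifferentiableAt ℝ (fderiv ℝ f) x :=
      (hfc.fderiv_right (m := 1) hle2).differentiableAt one_ne_zero
    have key : ∀ v w : Fin m → ℝ,
        fderiv ℝ (fun y => fderiv ℝ f y w) x v = fderiv ℝ (fderiv ℝ f) x v w := by
      intro v w
      have h2 := fderiv_clm_apply (c := fderiv ℝ f) (u := fun _ => w) hf'
        (differentiableAt_const w)
      rw [show (fun y => fderiv ℝ f y w) = fun y => (fderiv ℝ f y) ((fun _ => w) y) from rfl,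
        h2]
      simp
    rw [key, key]
    have hev : ∀ᶠ y in nhds x, HasFDerivAt f (fderiv ℝ f y) y := by
      filter_upwards [hUx] with y hy
      exact (hTdy y hy i j).hasFDerivAt
    exact second_derivative_symmetric_of_eventually hev hf'.hasFDerivAt _ _
  -- rewrite the transformed potential near x
  have hcongr : ∀ ρ σ : Fin m,
      pdM ρ (fun y => T y * (A σ y - S y * pdM σ T y) * S y) x
        = pdM ρ (fun y => T y * A σ y * S y - pdM σ T y * S y) x := by
    intro ρ σ
    apply pdM_congr
    filter_upwards [hUx] with y hy
    rw [mul_sub, sub_mul, ← Matrix.mul_assoc (T y) (S y), hTS y hy, one_mul]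
  have hD : ∀ ρ σ : Fin m,
      pdM ρ (fun y => T y * A σ y * S y - pdM σ T y * S y) x
        = ((pdM ρ T x * A σ x + T x * pdM ρ (A σ) x) * S x + (T x * A σ x) * pdM ρ S x)
          - (pdM ρ (pdM σ T) x * S x + pdM σ T x * pdM ρ S x) := by
    intro ρ σ
    rw [pdM_sub ρ _ _ x (entry_mul_diffAt (entry_mul_diffAt hTd (hAd σ)) hSd)
      (entry_mul_diffAt (hdTd σ) hSd),
      pdM_mul ρ (fun y => T y * A σ y) S x (entry_mul_diffAt hTd (hAd σ)) hSd,
      pdM_mul ρ T (A σ) x hTd (hAd σ),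
      pdM_mul ρ (fun y => pdM σ T y) S x (hdTd σ) hSd]
  -- values at x
  have hval : ∀ ρ : Fin m,
      T x * (A ρ x - S x * pdM ρ T x) * S x = T x * A ρ x * S x - pdM ρ T x * S x := by
    intro ρ
    rw [mul_sub, sub_mul, ← Matrix.mul_assoc (T x) (S x), hTS x hx, one_mul]
  simp only [gaugeStrength, hcongr, hD, hval, hdS, hsym]
  have hst' : ∀ X : Matrix (Fin k) (Fin k) ℝ, S x * (T x * X) = X := by
    intro X; rw [← Matrix.mul_assoc, hST x hx, one_mul]
  have hts' : ∀ X : Matrix (Fin k) (Fin k) ℝ, T x * (S x * X) = X := by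
    intro X; rw [← Matrix.mul_assoc, hTS x hx, one_mul]
  simp only [mul_sub, sub_mul, mul_add, add_mul, mul_neg, neg_mul, Matrix.mul_assoc,
    hst', hts', mul_one, one_mul, neg_neg]
  abel
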